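/- For every natural number n ≥ 0, the alternating sum ∑_{i=0}^n (-1)^{n-i} * C(i+1, n-i) * Cat(i) equals the Kronecker delta δ_{0,n}, where Cat(i) = C(2i, i)/(i+1) is the i-th Catalan number. -/

import Mathlib

open Polynomial Finset

private noncomputable def Pcat (N : ℕ) : Polynomial ℤ :=
  ∑ i ∈ Finset.range (N + 1), Polynomial.C (catalan i : ℤ) * Polynomial.X ^ i

private lemma coeff_Pcat {N r : ℕ} (h : r ≤ N) : (Pcat N).coeff r = catalan r := by
  rw [Pcat, finset_sum_coeff]
  rw [Finset.sum_eq_single_of_mem r (Finset.mem_range.2 (Nat.lt_succ_of_le h))]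
  · simp
  · intro b _ hb
    rw [coeff_C_mul, coeff_X_pow, if_neg (fun c => hb c.symm), mul_zero]

private lemma key1 (N : ℕ) :
    (Polynomial.X : Polynomial ℤ) ^ (N + 1) ∣ Pcat N - (1 + X * (Pcat N) ^ 2) := by
  rw [X_pow_dvd_iff]
  intro d hd
  have hdN : d ≤ N := Nat.lt_succ_iff.mp hd
  rw [coeff_sub, coeff_add, coeff_Pcat hdN]
  cases d with
  | zero => simp [Pcat]
  | succ e =>
    rw [sq, coeff_X_mul, coeff_mul, coeff_one]
    have he : ∀ p ∈ antidiagonal e, (Pcat N).coeff p.1 * (Pcat N).coeff p.2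
        = (catalan p.1 : ℤ) * (catalan p.2 : ℤ) := by
      intro p hp
      rw [Finset.HasAntidiagonal.mem_antidiagonal] at hp
      rw [coeff_Pcat (le_trans (Nat.le.intro hp) (le_trans (Nat.le_succ e) hdN)),
        coeff_Pcat (le_trans (Nat.le.intro (Nat.add_comm p.1 p.2 ▸ hp))
          (le_trans (Nat.le_succ e) hdN))]
    rw [Finset.sum_congr rfl he]
    have h2 := catalan_succ' e
    push_cast [h2]
    simp

private lemma coeff_one_sub_pow (m j : ℕ) :
    ((1 - X : Polynomial ℤ) ^ m).coeff j = (-1 : ℤ) ^ j * (m.choose j) := by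
  have h : (1 - X : Polynomial ℤ) = -X + 1 := by ring
  rw [h, add_pow, finset_sum_coeff]
  have hterm : ∀ k, ((-X : Polynomial ℤ) ^ k * 1 ^ (m - k) * (m.choose k : Polynomial ℤ))
      = C ((-1 : ℤ) ^ k * (m.choose k : ℤ)) * X ^ k := by
    intro k
    rw [neg_pow, one_pow, mul_one, map_mul, map_pow, map_neg, map_one]
    simp only [C_eq_natCast]
    ring
  rcases le_or_gt j m with hj | hj
  · rw [Finset.sum_eq_single_of_mem j (Finset.mem_range.2 (Nat.lt_succ_of_le hj))]
    · rw [hterm, coeff_C_mul, coeff_X_pow, if_pos rfl, mul_one]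
    · intro b _ hb
      rw [hterm, coeff_C_mul, coeff_X_pow, if_neg (fun c => hb c.symm), mul_zero]
  · rw [Nat.choose_eq_zero_of_lt hj, Finset.sum_eq_zero]
    · simp
    · intro b hb
      rw [hterm, coeff_C_mul, coeff_X_pow,
        if_neg (by rintro rfl; exact absurd (Finset.mem_range.mp hb) (by omega)), mul_zero]

theorem stmt_0 (n : ℕ) :
    ∑ i ∈ Finset.range (n + 1),
      (-1 : ℤ) ^ (n - i) * ((i + 1).choose (n - i)) * catalan i
      = if n = 0 then 1 else 0 := by
  set Y : Polynomial ℤ := X * (1 - X) with hY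
  set A : Polynomial ℤ := (Pcat n).comp Y with hA
  set G : Polynomial ℤ := ∑ k ∈ Finset.range (n + 1), (X : Polynomial ℤ) ^ k with hG
  have hg1 : (1 - X) * G = 1 - X ^ (n + 1) := by
    have h := geom_sum_mul (X : Polynomial ℤ) (n + 1)
    rw [hG]; linear_combination -h
  have key2 : (X : Polynomial ℤ) ^ (n + 1) ∣ A - (1 + Y * A ^ 2) := by
    obtain ⟨R, hR⟩ := key1 n
    have hcomp : A - (1 + Y * A ^ 2) = Y ^ (n + 1) * R.comp Y := by
      have h := congrArg (fun q => Polynomial.comp q Y) hR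
      simpa [sub_comp, add_comp, mul_comp, one_comp, X_comp, pow_comp, hA] using h
    rw [hcomp, hY]
    exact dvd_mul_of_dvd_left
      (pow_dvd_pow_of_dvd ⟨1 - X, rfl⟩ (n + 1)) _
  have keyG : G - (1 + Y * G ^ 2) = X ^ (n + 1) * (X * G - 1) := by
    rw [hY]; linear_combination (1 - X * G) * hg1
  have hDvd : (X : Polynomial ℤ) ^ (n + 1) ∣
      (A - G) - X * ((1 - X) * (A + G) * (A - G)) := by
    have h2 : (A - G) - X * ((1 - X) * (A + G) * (A - G))
        = (A - (1 + Y * A ^ 2)) - (G - (1 + Y * G ^ 2)) := by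
      rw [hY]; ring
    rw [h2, keyG]
    exact dvd_sub key2 (Dvd.intro _ rfl)
  have hcoeffD : ∀ k, k ≤ n → (A - G).coeff k = 0 := by
    intro k
    induction k using Nat.strong_induction_on with
    | _ k ih =>
      intro hk
      have h0 := (X_pow_dvd_iff.mp hDvd) k (Nat.lt_succ_of_le hk)
      rw [coeff_sub, sub_eq_zero] at h0
      rw [h0]
      cases k with
      | zero => simp
      | succ e =>
        rw [coeff_X_mul, coeff_mul]
        apply Finset.sum_eq_zero
        intro p hp
        rw [Finset.HasAntidiagonal.mem_antidiagonal] at hp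
        have hp2 : p.2 ≤ e := Nat.le.intro (Nat.add_comm p.1 p.2 ▸ hp)
        rw [ih p.2 (Nat.lt_succ_of_le hp2) (le_trans hp2 (le_trans (Nat.le_succ e) hk)),
          mul_zero]
  have hmain : (∑ i ∈ Finset.range (n + 1),
      (-1 : ℤ) ^ (n - i) * ((i + 1).choose (n - i)) * catalan i)
      = ((1 - X) * A).coeff n := by
    have hexp : (1 - X) * A = ∑ i ∈ Finset.range (n + 1),
        C (catalan i : ℤ) * (X ^ i * (1 - X) ^ (i + 1)) := by
      rw [hA, Pcat, Polynomial.sum_comp, Finset.mul_sum]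
      apply Finset.sum_congr rfl
      intro i _
      rw [mul_comp, C_comp, pow_comp, X_comp, hY, mul_pow]
      ring
    rw [hexp, finset_sum_coeff]
    apply Finset.sum_congr rfl
    intro i hi
    have hin : i ≤ n := Nat.lt_succ_iff.mp (Finset.mem_range.mp hi)
    have hXp : ((X : Polynomial ℤ) ^ i * (1 - X) ^ (i + 1)).coeff n
        = ((1 - X : Polynomial ℤ) ^ (i + 1)).coeff (n - i) := by
      conv_lhs => rw [show n = (n - i) + i from (Nat.sub_add_cancel hin).symm]
      exact coeff_X_pow_mul _ _ _
    rw [coeff_C_mul, hXp, coeff_one_sub_pow]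
    ring
  rw [hmain]
  have hsplit : (1 - X) * A = (1 - X ^ (n + 1)) + (1 - X) * (A - G) := by
    linear_combination hg1
  rw [hsplit, coeff_add, coeff_sub, coeff_one, coeff_X_pow,
    if_neg (Nat.ne_of_lt (Nat.lt_succ_self n)), coeff_mul, Finset.sum_eq_zero]
  · simp [eq_comm]
  · intro p hp
    rw [Finset.HasAntidiagonal.mem_antidiagonal] at hp
    rw [hcoeffD p.2 (Nat.le.intro (Nat.add_comm p.1 p.2 ▸ hp)), mul_zero]
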